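/- In the algebra U with K = f_{q^{1/2}}, the elements H = (2/(q²−q^{-2}))(K^{-4} − 1), X = q^{-1/2} F K, Y = q^{3/2} K^{-3} E satisfy: q^{-2}HX − q²XH = 2X, q²HY − q^{-2}YH = −2Y, and qXY − q^{-1}YX = ((q+q^{-1})/2) H. -/

import Mathlib

set_option maxHeartbeats 1600000 in
set_option linter.unusedTactic false in
/-- In `U` with `K' = K⁻¹`, the elements `H = (2/(q²−q⁻²))(K⁻⁴−1)`,
`X = q^{−1/2}FK`, `Y = q^{3/2}K⁻³E` satisfy the relations of calculus 8:
`q⁻²HX − q²XH = 2X`, `q²HY − q⁻²YH = −2Y`, `qXY − q⁻¹YX = ((q+q⁻¹)/2)H`. -/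
theorem stmt13 {A : Type*} [Ring A] [Algebra ℂ A]
    (q s : ℂ) (hs : s ^ 2 = q) (hq0 : q ≠ 0)
    (hroot : ∀ n : ℕ, 0 < n → q ^ n ≠ 1)
    (E F K K' : A)
    (hKK' : K * K' = 1) (hK'K : K' * K = 1)
    (hKE : K * E = q • (E * K)) (hKF : K * F = q⁻¹ • (F * K))
    (hEF : E * F - F * E = (q - q⁻¹)⁻¹ • (K ^ 2 - K' ^ 2)) :
    let H := (2 * (q ^ 2 - (q ^ 2)⁻¹)⁻¹) • (K' ^ 4 - 1)
    let X := s⁻¹ • (F * K)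
    let Y := (s ^ 3) • (K' ^ 3 * E)
    (q ^ 2)⁻¹ • (H * X) - (q ^ 2) • (X * H) = (2 : ℂ) • X ∧
    (q ^ 2) • (H * Y) - (q ^ 2)⁻¹ • (Y * H) = (-2 : ℂ) • Y ∧
    q • (X * Y) - q⁻¹ • (Y * X) = ((q + q⁻¹) / 2) • H := by
  intro H X Y
  have hs0 : s ≠ 0 := by
    intro h; apply hq0; rw [← hs, h]; ring
  have hq2 : q ^ 2 ≠ 1 := hroot 2 (by norm_num)
  have hq4 : q ^ 4 ≠ 1 := hroot 4 (by norm_num)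
  have hq20 : q ^ 2 ≠ 0 := pow_ne_zero _ hq0
  have hd0 : q ^ 2 - (q ^ 2)⁻¹ ≠ 0 := by
    intro h; apply hq4
    field_simp at h
    linear_combination h
  have he0 : q - q⁻¹ ≠ 0 := by
    intro h; apply hq2
    field_simp at h
    linear_combination h
  have hs4 : s ^ 4 ≠ 1 := by
    intro h; exact hq2 (by rw [← hs]; linear_combination h)
  have hs8 : s ^ 8 ≠ 1 := by
    intro h; exact hq4 (by rw [← hs]; linear_combination h)
  have hs4p : s ^ 4 + 1 ≠ 0 := by
    intro h; exact hs8 (by linear_combination (s ^ 4 - 1) * h)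
  have e1 : (s ^ 2) ^ 2 - ((s ^ 2) ^ 2)⁻¹ = (s ^ 8 - 1) / s ^ 4 := by
    field_simp
  have e2 : s ^ 2 - (s ^ 2)⁻¹ = (s ^ 4 - 1) / s ^ 2 := by
    field_simp
  have h81 : s ^ 8 - 1 ≠ 0 := sub_ne_zero.mpr hs8
  have h41 : s ^ 4 - 1 ≠ 0 := sub_ne_zero.mpr hs4
  -- basic commutation lemmas
  have hEK : E * K = q⁻¹ • (K * E) := by rw [hKE, inv_smul_smul₀ hq0]
  have hEK' : E * K' = q • (K' * E) := by
    calc E * K' = (K' * K) * (E * K') := by rw [hK'K, one_mul]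
      _ = K' * ((K * E) * K') := by rw [mul_assoc, mul_assoc]
      _ = K' * ((q • (E * K)) * K') := by rw [hKE]
      _ = q • (K' * (E * (K * K'))) := by
          rw [smul_mul_assoc, mul_smul_comm, mul_assoc]
      _ = q • (K' * E) := by rw [hKK', mul_one]
  have hFK' : F * K' = q⁻¹ • (K' * F) := by
    calc F * K' = (K' * K) * (F * K') := by rw [hK'K, one_mul]
      _ = K' * ((K * F) * K') := by rw [mul_assoc, mul_assoc]
      _ = K' * ((q⁻¹ • (F * K)) * K') := by rw [hKF]
      _ = q⁻¹ • (K' * (F * (K * K'))) := by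
          rw [smul_mul_assoc, mul_smul_comm, mul_assoc]
      _ = q⁻¹ • (K' * F) := by rw [hKK', mul_one]
  have hK'F : K' * F = q • (F * K') := by
    rw [hFK', smul_inv_smul₀ hq0]
  -- powers
  have hK'pF : ∀ n : ℕ, K' ^ n * F = (q ^ n) • (F * K' ^ n) := by
    intro n; induction n with
    | zero => simp
    | succ n ih =>
      calc K' ^ (n+1) * F = K' * (K' ^ n * F) := by rw [pow_succ', mul_assoc]
        _ = (q ^ n) • ((K' * F) * K' ^ n) := by
            rw [ih, mul_smul_comm, mul_assoc]
        _ = (q ^ n * q) • (F * (K' * K' ^ n)) := by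
            rw [hK'F, smul_mul_assoc, smul_smul, mul_assoc]
        _ = (q ^ (n+1)) • (F * K' ^ (n+1)) := by rw [← pow_succ, ← pow_succ']
  have hEK'p : ∀ n : ℕ, E * K' ^ n = (q ^ n) • (K' ^ n * E) := by
    intro n; induction n with
    | zero => simp
    | succ n ih =>
      calc E * K' ^ (n+1) = (E * K') * K' ^ n := by rw [pow_succ', ← mul_assoc]
        _ = q • (K' * (E * K' ^ n)) := by rw [hEK', smul_mul_assoc, mul_assoc]
        _ = (q * q ^ n) • (K' * (K' ^ n * E)) := by rw [ih, mul_smul_comm, smul_smul]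
        _ = (q ^ (n+1)) • (K' ^ (n+1) * E) := by
            rw [← mul_assoc, ← pow_succ', ← pow_succ']
  have hcan1 : ∀ n : ℕ, K' ^ (n+1) * K = K' ^ n := by
    intro n; rw [pow_succ, mul_assoc, hK'K, mul_one]
  have hcan2 : ∀ n : ℕ, K * K' ^ (n+1) = K' ^ n := by
    intro n; rw [pow_succ', ← mul_assoc, hKK', one_mul]
  have hcan3 : ∀ n : ℕ, K' ^ n * K ^ n = (1 : A) := by
    intro n; induction n with
    | zero => simp
    | succ n ih => rw [pow_succ' K, ← mul_assoc, hcan1, ih]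
  -- key products
  have k1 : (K' ^ 4 - 1) * (F * K) = (q ^ 4) • (F * K' ^ 3) - F * K := by
    rw [sub_mul, one_mul, ← mul_assoc, hK'pF 4, smul_mul_assoc, mul_assoc, hcan1 3]
  have k2 : (F * K) * (K' ^ 4 - 1) = F * K' ^ 3 - F * K := by
    rw [mul_sub, mul_one, mul_assoc, hcan2 3]
  have k3 : (K' ^ 4 - 1) * (K' ^ 3 * E) = K' ^ 7 * E - K' ^ 3 * E := by
    rw [sub_mul, one_mul, ← mul_assoc, ← pow_add]
  have k4 : (K' ^ 3 * E) * (K' ^ 4 - 1) = (q ^ 4) • (K' ^ 7 * E) - K' ^ 3 * E := by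
    rw [mul_sub, mul_one, mul_assoc, hEK'p 4, mul_smul_comm, ← mul_assoc, ← pow_add]
  have k5 : (F * K) * (K' ^ 3 * E) = F * (K' ^ 2 * E) := by
    rw [mul_assoc, ← mul_assoc K, hcan2 2, ← mul_assoc]
  have hEFe : E * F = F * E + (q - q⁻¹)⁻¹ • (K ^ 2 - K' ^ 2) := by
    rw [← sub_add_cancel (E * F) (F * E), hEF]; exact add_comm _ _
  have k6 : (K' ^ 3 * E) * (F * K) =
      (q ^ 2) • (F * (K' ^ 2 * E)) + (q - q⁻¹)⁻¹ • (1 - K' ^ 4) := by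
    have hmid : K' ^ 3 * ((K ^ 2 - K' ^ 2) * K) = 1 - K' ^ 4 := by
      have a1 : K' ^ 3 * (K ^ 2 * K) = (1 : A) := by
        rw [← pow_succ]; exact hcan3 3
      have a2 : K' ^ 3 * (K' ^ 2 * K) = K' ^ 4 := by
        rw [← mul_assoc, ← pow_add]; exact hcan1 4
      rw [sub_mul, mul_sub, a1, a2]
    have hfe : K' ^ 3 * ((F * E) * K) = (q ^ 2) • (F * (K' ^ 2 * E)) := by
      calc K' ^ 3 * ((F * E) * K) = (K' ^ 3 * F) * (E * K) := by
            noncomm_ring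
        _ = (q ^ 3) • ((F * K' ^ 3) * (q⁻¹ • (K * E))) := by rw [hK'pF 3, hEK, smul_mul_assoc]
        _ = (q ^ 3 * q⁻¹) • (F * ((K' ^ 3 * K) * E)) := by
            rw [mul_smul_comm, smul_smul, mul_assoc, ← mul_assoc (K'^3)]
        _ = (q ^ 2) • (F * (K' ^ 2 * E)) := by
            rw [hcan1 2]
            congr 1
            field_simp
    calc (K' ^ 3 * E) * (F * K) = K' ^ 3 * ((E * F) * K) := by
          rw [mul_assoc, ← mul_assoc E]
      _ = K' ^ 3 * ((F * E) * K) + (q - q⁻¹)⁻¹ • (K' ^ 3 * ((K ^ 2 - K' ^ 2) * K)) := by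
          rw [hEFe, add_mul, mul_add, smul_mul_assoc, mul_smul_comm]
      _ = (q ^ 2) • (F * (K' ^ 2 * E)) + (q - q⁻¹)⁻¹ • (1 - K' ^ 4) := by
          rw [hfe, hmid]
  refine ⟨?_, ?_, ?_⟩
  · show (q ^ 2)⁻¹ • (((2 * (q ^ 2 - (q ^ 2)⁻¹)⁻¹) • (K' ^ 4 - 1)) * (s⁻¹ • (F * K)))
      - (q ^ 2) • ((s⁻¹ • (F * K)) * ((2 * (q ^ 2 - (q ^ 2)⁻¹)⁻¹) • (K' ^ 4 - 1)))
      = (2 : ℂ) • (s⁻¹ • (F * K))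
    rw [smul_mul_assoc, smul_mul_assoc, mul_smul_comm, mul_smul_comm, k1, k2]
    match_scalars
    · (try rw [← hs]); (try simp only [e1, e2]); field_simp [h81, h41, hs4p]; try ring
    · (try rw [← hs]); (try simp only [e1, e2]); field_simp [h81, h41, hs4p]; try ring
  · show (q ^ 2) • (((2 * (q ^ 2 - (q ^ 2)⁻¹)⁻¹) • (K' ^ 4 - 1)) * ((s ^ 3) • (K' ^ 3 * E)))
      - (q ^ 2)⁻¹ • (((s ^ 3) • (K' ^ 3 * E)) * ((2 * (q ^ 2 - (q ^ 2)⁻¹)⁻¹) • (K' ^ 4 - 1)))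
      = (-2 : ℂ) • ((s ^ 3) • (K' ^ 3 * E))
    rw [smul_mul_assoc, smul_mul_assoc, mul_smul_comm, mul_smul_comm, k3, k4]
    match_scalars
    · (try rw [← hs]); (try simp only [e1, e2]); field_simp [h81, h41, hs4p]; try ring
    · (try rw [← hs]); (try simp only [e1, e2]); field_simp [h81, h41, hs4p]; try ring
  · show q • (((s⁻¹) • (F * K)) * ((s ^ 3) • (K' ^ 3 * E)))
      - q⁻¹ • (((s ^ 3) • (K' ^ 3 * E)) * ((s⁻¹) • (F * K)))
      = ((q + q⁻¹) / 2) • ((2 * (q ^ 2 - (q ^ 2)⁻¹)⁻¹) • (K' ^ 4 - 1))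
    rw [smul_mul_assoc, smul_mul_assoc, mul_smul_comm, mul_smul_comm, k5, k6]
    match_scalars
    · (try rw [← hs]); (try simp only [e1, e2]); field_simp [h81, h41, hs4p]; try ring
    · (try rw [← hs]); (try simp only [e1, e2]); field_simp [h81, h41, hs4p]; try ring
    · (try rw [← hs]); (try simp only [e1, e2]); field_simp [h81, h41, hs4p]; try ring
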